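/- Let f : ℝ → ℝ be the inverse of h and define L : ℝ → ℝ by L(v) = f(v)². Then there exists a constant C₀ > 0 such that L(2v) ≤ C₀·L(v) for every v ∈ ℝ (the Δ₂-condition for L). -/

import Mathlib

/-- The change of variables `h(u) = (1/2)·u·√(1+u²) + (1/2)·log(u + √(1+u²))`. -/
noncomputable def h (u : ℝ) : ℝ :=
  (1 / 2) * u * Real.sqrt (1 + u ^ 2) + (1 / 2) * Real.log (u + Real.sqrt (1 + u ^ 2))

lemma sqrt_one_add_sq_pos (u : ℝ) : 0 < Real.sqrt (1 + u ^ 2) :=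
  Real.sqrt_pos.2 (by positivity)

lemma hasDerivAt_h (u : ℝ) : HasDerivAt h (Real.sqrt (1 + u ^ 2)) u := by
  have hs : (0:ℝ) < 1 + u ^ 2 := by positivity
  have h1 : HasDerivAt (fun u : ℝ => 1 + u ^ 2) (2 * u) u := by
    simpa using (hasDerivAt_pow 2 u).const_add 1
  have h2 : HasDerivAt (fun u : ℝ => Real.sqrt (1 + u ^ 2))
      (2 * u / (2 * Real.sqrt (1 + u ^ 2))) u :=
    (Real.hasDerivAt_sqrt hs.ne').comp u h1 |>.congr_deriv (by ring)
  have h3 : HasDerivAt (fun u : ℝ => (1/2) * u * Real.sqrt (1 + u ^ 2))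
      ((1/2) * (Real.sqrt (1 + u ^ 2) + u * (2 * u / (2 * Real.sqrt (1 + u ^ 2))))) u := by
    have := ((hasDerivAt_id u).mul h2)
    simpa [mul_assoc, mul_comm, mul_left_comm, mul_add] using this.const_mul (1/2 : ℝ)
  have h4 : HasDerivAt (fun u : ℝ => (1/2) * Real.log (u + Real.sqrt (1 + u ^ 2)))
      ((1/2) * (Real.sqrt (1 + u ^ 2))⁻¹) u := by
    have := (Real.hasDerivAt_arsinh u).const_mul (1/2 : ℝ)
    simpa [Real.arsinh] using this
  have := h3.add h4
  have hsne : Real.sqrt (1 + u ^ 2) ≠ 0 := (sqrt_one_add_sq_pos u).ne'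
  have hsq : Real.sqrt (1 + u ^ 2) ^ 2 = 1 + u ^ 2 := Real.sq_sqrt hs.le
  refine HasDerivAt.congr_deriv (f := h) this ?_
  field_simp
  linear_combination (-1) * hsq

lemma h_strictMono : StrictMono h :=
  strictMono_of_deriv_pos fun u => by
    rw [(hasDerivAt_h u).deriv]; exact sqrt_one_add_sq_pos u

lemma h_zero : h 0 = 0 := by simp [h]

lemma h_neg (u : ℝ) : h (-u) = - h u := by
  have := Real.arsinh_neg u
  simp only [Real.arsinh] at this
  rw [neg_sq] at this
  simp only [h, neg_sq, this]
  ring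

lemma h_two_mul (u : ℝ) (hu : 0 ≤ u) : 2 * h u ≤ h (2 * u) := by
  have hd : ∀ x : ℝ, HasDerivAt (fun u : ℝ => h (2 * u) - 2 * h u)
      (Real.sqrt (1 + (2*x) ^ 2) * 2 - 2 * Real.sqrt (1 + x ^ 2)) x := by
    intro x
    have h1 : HasDerivAt (fun u : ℝ => h (2 * u)) (Real.sqrt (1 + (2*x) ^ 2) * 2) x := by
      have := (hasDerivAt_h (2 * x)).comp x ((hasDerivAt_id x).const_mul 2)
      simpa [Function.comp_def] using this
    exact h1.sub ((hasDerivAt_h x).const_mul 2)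
  have key : MonotoneOn (fun u : ℝ => h (2 * u) - 2 * h u) (Set.Ici 0) := by
    apply monotoneOn_of_deriv_nonneg (convex_Ici 0)
    · exact (Differentiable.continuous fun x => (hd x).differentiableAt).continuousOn
    · intro x _
      exact ((hd x).differentiableAt).differentiableWithinAt
    · intro x _
      rw [(hd x).deriv]
      have : Real.sqrt (1 + x ^ 2) ≤ Real.sqrt (1 + (2*x) ^ 2) := by
        apply Real.sqrt_le_sqrt; nlinarith
      nlinarith
  have := key (Set.self_mem_Ici) (Set.mem_Ici.2 hu) hu
  simp only [mul_zero, h_zero, sub_zero] at this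
  linarith

lemma f_neg (f : ℝ → ℝ) (hf₂ : Function.RightInverse f h) (v : ℝ) : f (-v) = - f v := by
  have h1 : h (f (-v)) = -v := hf₂ _
  have h2 : h (- f v) = -v := by rw [h_neg, hf₂]
  exact h_strictMono.injective (h1.trans h2.symm)

theorem stmt_12 (f : ℝ → ℝ) (hf₁ : Function.LeftInverse f h)
    (hf₂ : Function.RightInverse f h) :
    ∃ C₀ : ℝ, 0 < C₀ ∧ ∀ v : ℝ, f (2 * v) ^ 2 ≤ C₀ * f v ^ 2 := by
  refine ⟨4, by norm_num, ?_⟩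
  have key : ∀ v : ℝ, 0 ≤ v → f (2 * v) ^ 2 ≤ 4 * f v ^ 2 := by
    intro v hv
    set u := f v with hu
    have hhu : h u = v := hf₂ v
    have hu0 : 0 ≤ u := by
      by_contra hneg
      push_neg at hneg
      have := h_strictMono hneg
      rw [hhu, h_zero] at this; linarith
    have h2u : 2 * v ≤ h (2 * u) := by
      calc 2 * v = 2 * h u := by rw [hhu]
        _ ≤ h (2 * u) := h_two_mul u hu0
    have hf2v : f (2 * v) ≤ 2 * u := by
      have : h (f (2 * v)) ≤ h (2 * u) := by rw [hf₂]; exact h2u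
      exact (h_strictMono.le_iff_le).1 this
    have hf2v0 : 0 ≤ f (2 * v) := by
      have : h 0 ≤ h (f (2 * v)) := by rw [h_zero, hf₂]; linarith
      exact (h_strictMono.le_iff_le).1 this
    nlinarith
  intro v
  rcases le_or_gt 0 v with hv | hv
  · exact key v hv
  · have := key (-v) (by linarith)
    rw [show (2:ℝ) * -v = -(2*v) by ring, f_neg f hf₂, f_neg f hf₂] at this
    simpa using this
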